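/- The Lyapunov iteration lower-bounds the Riccati iteration: let Z_n(0), n = 1,…,N, be positive semidefinite symmetric n_x×n_x matrices and define Z_n(k+1) = Σ_{m=1}^N p_{e,mn} 𝒳_λ(Z_m(k), π^∞_{e,m}, γ̂_{e,m}). Define S_n(0) = 0 and S_n(k+1) = 𝒮_{e,n}(S(k)). Assume π^∞_e is stationary for P_e, i.e. π^∞_{e,n} = Σ_{m=1}^N p_{e,mn} π^∞_{e,m} for all n. Then S_n(k) ⪯ Z_n(k) for every k ∈ ℕ and every n = 1,…,N. -/

import Mathlib

open Matrix Kronecker Filter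

/-- The Riccati-type operator 𝒳_λ(X, α, φ). -/
noncomputable def calX {nx ny : ℕ} (A : Matrix (Fin nx) (Fin nx) ℝ)
    (L : Matrix (Fin ny) (Fin nx) ℝ) (Q : Matrix (Fin nx) (Fin nx) ℝ)
    (R : Matrix (Fin ny) (Fin ny) ℝ) (lam : ℝ) (X : Matrix (Fin nx) (Fin nx) ℝ)
    (al phi : ℝ) : Matrix (Fin nx) (Fin nx) ℝ :=
  (1 - lam * phi) • (A * X * Aᵀ + al • Q) +
    (lam * phi) •
      (A * X * Aᵀ + al • Q - A * X * Lᵀ * (L * X * Lᵀ + al • R)⁻¹ * (L * X * Aᵀ))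

/-- Loewner order: `X ⪯ Y` iff `Y - X` is positive semidefinite. -/
def loewnerLE {nx : ℕ} (X Y : Matrix (Fin nx) (Fin nx) ℝ) : Prop :=
  (Y - X).PosSemidef

/-- The trajectory of the coupled Riccati recursion
`Z_n(k+1) = ∑ m, p_{mn} 𝒳_λ(Z_m(k), α_m(k), γ_m)` started at `Y0`. -/
noncomputable def traj {nx ny N : ℕ} (A : Matrix (Fin nx) (Fin nx) ℝ)
    (L : Matrix (Fin ny) (Fin nx) ℝ) (Q : Matrix (Fin nx) (Fin nx) ℝ)
    (R : Matrix (Fin ny) (Fin ny) ℝ) (P : Matrix (Fin N) (Fin N) ℝ)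
    (γ : Fin N → ℝ) (α : Fin N → ℕ → ℝ) (lam : ℝ)
    (Y0 : Fin N → Matrix (Fin nx) (Fin nx) ℝ) : ℕ → Fin N → Matrix (Fin nx) (Fin nx) ℝ
  | 0 => Y0
  | k + 1 => fun n =>
      ∑ m, P m n • calX A L Q R lam (traj A L Q R P γ α lam Y0 k m) (α m k) (γ m)

/-- The coupled Lyapunov operator
`𝒮_{e,n}(V) = ∑ m, p_{e,mn} (1 − λ γ̂_{e,m}) A V_m Aᵀ + π^∞_{e,n} Q`. -/
noncomputable def Sop {nx N : ℕ} (A Q : Matrix (Fin nx) (Fin nx) ℝ)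
    (Pe : Matrix (Fin N) (Fin N) ℝ) (γ : Fin N → ℝ) (lam : ℝ) (π : Fin N → ℝ)
    (V : Fin N → Matrix (Fin nx) (Fin nx) ℝ) (n : Fin N) :
    Matrix (Fin nx) (Fin nx) ℝ :=
  (∑ m, (Pe m n * (1 - lam * γ m)) • (A * V m * Aᵀ)) + π n • Q

/-- The coupled Lyapunov iteration started at the zero tuple. -/
noncomputable def Straj {nx N : ℕ} (A Q : Matrix (Fin nx) (Fin nx) ℝ)
    (Pe : Matrix (Fin N) (Fin N) ℝ) (γ : Fin N → ℝ) (lam : ℝ) (π : Fin N → ℝ) :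
    ℕ → Fin N → Matrix (Fin nx) (Fin nx) ℝ
  | 0 => fun _ => 0
  | k + 1 => fun n => Sop A Q Pe γ lam π (Straj A Q Pe γ lam π k) n

/-- Block diagonal matrix (direct sum) of `N` matrices on the index set `I`. -/
def blkDiag {N : ℕ} {I : Type}
    (f : Fin N → Matrix I I ℝ) : Matrix (Fin N × I) (Fin N × I) ℝ :=
  Matrix.of fun p q => if p.1 = q.1 then f p.1 p.2 q.2 else 0

/-- The matrix `𝒜_e = (P_eᵀ ⊗ I_{n_x²}) · blkdiag_m ((1 − λ γ̂_{e,m}) (A ⊗ A))`. -/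
noncomputable def calAe {nx N : ℕ} (A : Matrix (Fin nx) (Fin nx) ℝ)
    (Pe : Matrix (Fin N) (Fin N) ℝ) (γ : Fin N → ℝ) (lam : ℝ) :
    Matrix (Fin N × (Fin nx × Fin nx)) (Fin N × (Fin nx × Fin nx)) ℝ :=
  (Peᵀ ⊗ₖ (1 : Matrix (Fin nx × Fin nx) (Fin nx × Fin nx) ℝ)) *
    blkDiag (fun m => (1 - lam * γ m) • (A ⊗ₖ A))

/-- Spectral radius of a real square matrix: the largest absolute value of its
(complex) eigenvalues. -/
noncomputable def specRad {ι : Type} [Fintype ι] [DecidableEq ι]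
    (M : Matrix ι ι ℝ) : ℝ :=
  sSup {r : ℝ | ∃ μ ∈ spectrum ℂ (M.map (Complex.ofReal ·)), r = ‖μ‖}


lemma psd_smul {n : Type} [Fintype n] {M : Matrix n n ℝ} (hM : M.PosSemidef) {c : ℝ}
    (hc : 0 ≤ c) : (c • M).PosSemidef := by
  constructor
  · unfold Matrix.IsHermitian
    rw [conjTranspose_smul, hM.1]
    simp
  · intro x
    exact (hM.smul hc).2 x

lemma pd_smul {n : Type} [Fintype n] {M : Matrix n n ℝ} (hM : M.PosDef) {c : ℝ}
    (hc : 0 < c) : (c • M).PosDef := by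
  constructor
  · unfold Matrix.IsHermitian
    rw [conjTranspose_smul, hM.1]
    simp
  · intro x hx
    exact (hM.smul hc).2 hx

lemma psd_conj {n m : Type} [Fintype n] [Fintype m] {M : Matrix n n ℝ} (hM : M.PosSemidef)
    (B : Matrix m n ℝ) : (B * M * Bᵀ).PosSemidef := by
  simpa [conjTranspose_eq_transpose_of_trivial] using hM.mul_mul_conjTranspose_same B

lemma psd_sum {ι : Type} (s : Finset ι) {n : Type} [Fintype n]
    (f : ι → Matrix n n ℝ) (h : ∀ i ∈ s, (f i).PosSemidef) : (∑ i ∈ s, f i).PosSemidef := by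
  classical
  induction s using Finset.induction_on with
  | empty => simpa using Matrix.PosSemidef.zero
  | insert _ _ hi ih =>
      rw [Finset.sum_insert hi]
      exact (h _ (Finset.mem_insert_self _ _)).add
        (ih fun i hmem => h i (Finset.mem_insert_of_mem hmem))

lemma schur_psd {nx ny : ℕ} (L : Matrix (Fin ny) (Fin nx) ℝ) {R : Matrix (Fin ny) (Fin ny) ℝ}
    (hR : R.PosDef) {X : Matrix (Fin nx) (Fin nx) ℝ} (hX : X.PosSemidef)
    {c : ℝ} (hc : 0 < c) :
    (X - X * Lᵀ * (L * X * Lᵀ + c • R)⁻¹ * (L * X)).PosSemidef := by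
  have hXT : Xᵀ = X := by rw [← conjTranspose_eq_transpose_of_trivial, hX.1]
  have hLXL : (L * X * Lᵀ).PosSemidef := psd_conj hX L
  have hMpd : (L * X * Lᵀ + c • R).PosDef :=
    Matrix.PosDef.posSemidef_add hLXL (pd_smul hR hc)
  letI := hMpd.isUnit.invertible
  have h1 : (fromBlocks X (X * Lᵀ) (L * X) (L * X * Lᵀ)).PosSemidef := by
    have := psd_conj hX (fromRows (1 : Matrix (Fin nx) (Fin nx) ℝ) L)
    rw [transpose_fromRows, fromRows_mul, fromRows_mul_fromCols] at this
    simpa [Matrix.mul_assoc] using this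
  have h2 : (fromBlocks 0 0 0 (c • R) :
      Matrix (Fin nx ⊕ Fin ny) (Fin nx ⊕ Fin ny) ℝ).PosSemidef := by
    have := psd_conj (pd_smul hR hc).posSemidef
      (fromRows (0 : Matrix (Fin nx) (Fin ny) ℝ) (1 : Matrix (Fin ny) (Fin ny) ℝ))
    rw [transpose_fromRows, fromRows_mul, fromRows_mul_fromCols] at this
    simpa using this
  have hblock : (fromBlocks X (X * Lᵀ) (L * X) (L * X * Lᵀ + c • R)).PosSemidef := by
    have := h1.add h2
    simpa [fromBlocks_add] using this
  have hBH : (X * Lᵀ)ᴴ = L * X := by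
    rw [conjTranspose_eq_transpose_of_trivial, transpose_mul, transpose_transpose, hXT]
  have hblock' : (fromBlocks X (X * Lᵀ) ((X * Lᵀ)ᴴ) (L * X * Lᵀ + c • R)).PosSemidef := by
    rw [hBH]; exact hblock
  have := (Matrix.PosDef.fromBlocks₂₂ X (X * Lᵀ) hMpd).mp hblock'
  rwa [hBH] at this

lemma calX_eq {nx ny : ℕ} (A : Matrix (Fin nx) (Fin nx) ℝ) (L : Matrix (Fin ny) (Fin nx) ℝ)
    (Q : Matrix (Fin nx) (Fin nx) ℝ) (R : Matrix (Fin ny) (Fin ny) ℝ) (lam : ℝ)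
    (X : Matrix (Fin nx) (Fin nx) ℝ) (c phi : ℝ) :
    calX A L Q R lam X c phi =
      (1 - lam * phi) • (A * X * Aᵀ) + c • Q +
        (lam * phi) • (A * (X - X * Lᵀ * (L * X * Lᵀ + c • R)⁻¹ * (L * X)) * Aᵀ) := by
  unfold calX
  simp only [Matrix.mul_sub, Matrix.sub_mul, Matrix.mul_assoc]
  module

theorem stmt_13 {nx ny N : ℕ} (hnx : 0 < nx) (hny : 0 < ny) (hN : 0 < N)
    (A : Matrix (Fin nx) (Fin nx) ℝ) (L : Matrix (Fin ny) (Fin nx) ℝ)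
    (Q : Matrix (Fin nx) (Fin nx) ℝ) (R : Matrix (Fin ny) (Fin ny) ℝ)
    (hQ : Q.PosDef) (hR : R.PosDef)
    (Pe : Matrix (Fin N) (Fin N) ℝ)
    (hPnonneg : ∀ m n, 0 ≤ Pe m n) (hProw : ∀ m, ∑ n, Pe m n = 1)
    (γ : Fin N → ℝ) (hγ : ∀ m, γ m ∈ Set.Icc (0 : ℝ) 1)
    (lam : ℝ) (hlam : lam ∈ Set.Icc (0 : ℝ) 1)
    (π : Fin N → ℝ) (hπ : ∀ n, 0 < π n)
    (hstat : ∀ n, π n = ∑ m, Pe m n * π m)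
    (Z0 : Fin N → Matrix (Fin nx) (Fin nx) ℝ) (hZ0 : ∀ n, (Z0 n).PosSemidef) :
    ∀ (k : ℕ) (n : Fin N),
      loewnerLE (Straj A Q Pe γ lam π k n)
        (traj A L Q R Pe γ (fun m _ => π m) lam Z0 k n) := by
  
  obtain ⟨hlam0, hlam1⟩ := hlam
  set Z := traj A L Q R Pe γ (fun m _ => π m) lam Z0 with hZdef
  set S := Straj A Q Pe γ lam π with hSdef
  have hco : ∀ m : Fin N, 0 ≤ lam * γ m ∧ lam * γ m ≤ 1 := by
    intro m
    obtain ⟨h1, h2⟩ := hγ m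
    constructor
    · exact mul_nonneg hlam0 h1
    · nlinarith
  have key : ∀ k n, (Z k n).PosSemidef ∧ (Z k n - S k n).PosSemidef := by
    intro k
    induction k with
    | zero =>
        intro n
        refine ⟨hZ0 n, ?_⟩
        simpa [hZdef, hSdef, traj, Straj] using hZ0 n
    | succ k ih =>
        intro n
        have hZk : ∀ m, (Z k m).PosSemidef := fun m => (ih m).1
        constructor
        · show (∑ m, Pe m n • calX A L Q R lam (Z k m) (π m) (γ m)).PosSemidef
          refine psd_sum _ _ fun m _ => psd_smul ?_ (hPnonneg m n)
          rw [calX_eq]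
          exact ((psd_smul (psd_conj (hZk m) A) (by linarith [(hco m).2])).add
            (psd_smul hQ.posSemidef (hπ m).le)).add
            (psd_smul (psd_conj (schur_psd L hR (hZk m) (hπ m)) A) (hco m).1)
        · have e1 : S (k+1) n = ∑ m, ((Pe m n * (1 - lam * γ m)) • (A * S k m * Aᵀ)
              + (Pe m n * π m) • Q) := by
            show Sop A Q Pe γ lam π (S k) n = _
            unfold Sop
            rw [hstat n, Finset.sum_smul, ← Finset.sum_add_distrib]
          have e2 : Z (k+1) n - S (k+1) n = ∑ m,
              (Pe m n • calX A L Q R lam (Z k m) (π m) (γ m)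
                - ((Pe m n * (1 - lam * γ m)) • (A * S k m * Aᵀ)
                   + (Pe m n * π m) • Q)) := by
            rw [e1, show Z (k+1) n = ∑ m, Pe m n • calX A L Q R lam (Z k m) (π m) (γ m)
              from rfl, ← Finset.sum_sub_distrib]
          rw [e2]
          refine psd_sum _ _ fun m _ => ?_
          have hterm : Pe m n • calX A L Q R lam (Z k m) (π m) (γ m)
                - ((Pe m n * (1 - lam * γ m)) • (A * S k m * Aᵀ) + (Pe m n * π m) • Q)
              = Pe m n • ((1 - lam * γ m) • (A * (Z k m - S k m) * Aᵀ)
                + (lam * γ m) • (A * (Z k m - Z k m * Lᵀ *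
                    (L * Z k m * Lᵀ + π m • R)⁻¹ * (L * Z k m)) * Aᵀ)) := by
            rw [calX_eq]
            rw [show A * (Z k m - S k m) * Aᵀ = A * Z k m * Aᵀ - A * S k m * Aᵀ by
              rw [Matrix.mul_sub, Matrix.sub_mul]]
            module
          rw [hterm]
          refine psd_smul ?_ (hPnonneg m n)
          exact (psd_smul (psd_conj (ih m).2 A) (by linarith [(hco m).2])).add
            (psd_smul (psd_conj (schur_psd L hR (hZk m) (hπ m)) A) (hco m).1)
  intro k n
  exact (key k n).2
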